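/- Let f : ∂D → ℝ be 1-Lipschitz (take Λ₀ = ∂D), let x₀ ∈ D and let θ₀ ∈ ℝ satisfy θ₀ < f(y) + d(x₀,y) for every y ∈ ∂D (i.e. θ₀ < f₊(x₀), so (x₀,θ₀) lies in the invisible domain). Then there exists ε > 0 such that every x ∈ D̄ with f₋(x) < θ₀ − d(x,x₀) satisfies ⟨x,e⟩ ≥ ε. (Intermediate claim in the proof that the invisible domain E(∂S) has regular cosmological time: the spherical projection of the past of any point of E(∂S) is contained in a compact subset of the open hemisphere.) -/

import Mathlib

open scoped RealInnerProductSpace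
open Real

/-- The closed hemisphere `D̄ = {x ∈ S² : ⟪x,e⟫ ≥ 0}`. -/
def closedHemi (e : EuclideanSpace ℝ (Fin 3)) : Set (EuclideanSpace ℝ (Fin 3)) :=
  {x | ‖x‖ = 1 ∧ 0 ≤ ⟪x, e⟫}

/-- The open hemisphere `D = {x ∈ S² : ⟪x,e⟫ > 0}`. -/
def openHemi (e : EuclideanSpace ℝ (Fin 3)) : Set (EuclideanSpace ℝ (Fin 3)) :=
  {x | ‖x‖ = 1 ∧ 0 < ⟪x, e⟫}

/-- The equatorial circle `∂D = {x ∈ S² : ⟪x,e⟫ = 0}`. -/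
def equator (e : EuclideanSpace ℝ (Fin 3)) : Set (EuclideanSpace ℝ (Fin 3)) :=
  {x | ‖x‖ = 1 ∧ ⟪x, e⟫ = 0}

/-- `f₋(x) = sup_{z ∈ Λ₀} (f z - d(x,z))`. -/
noncomputable def lowerEnv (Λ₀ : Set (EuclideanSpace ℝ (Fin 3)))
    (f : EuclideanSpace ℝ (Fin 3) → ℝ) (x : EuclideanSpace ℝ (Fin 3)) : ℝ :=
  sSup ((fun z => f z - Real.arccos ⟪x, z⟫) '' Λ₀)

/-- Spherical triangle inequality for unit vectors. -/
lemma arccos_inner_triangle {E : Type*} [NormedAddCommGroup E] [InnerProductSpace ℝ E]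
    (x y z : E) (hx : ‖x‖ = 1) (hy : ‖y‖ = 1) (hz : ‖z‖ = 1) :
    Real.arccos ⟪x, z⟫ ≤ Real.arccos ⟪x, y⟫ + Real.arccos ⟪y, z⟫ := by
  set a := Real.arccos ⟪x, y⟫ with ha
  set b := Real.arccos ⟪y, z⟫ with hb
  by_cases hab : a + b ≤ π
  · have hxy1 : |⟪x, y⟫| ≤ 1 := by
      have := abs_real_inner_le_norm x y; rwa [hx, hy, one_mul] at this
    have hyz1 : |⟪y, z⟫| ≤ 1 := by
      have := abs_real_inner_le_norm y z; rwa [hy, hz, one_mul] at this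
    have hca : Real.cos a = ⟪x, y⟫ := Real.cos_arccos (abs_le.mp hxy1).1 (abs_le.mp hxy1).2
    have hcb : Real.cos b = ⟪y, z⟫ := Real.cos_arccos (abs_le.mp hyz1).1 (abs_le.mp hyz1).2
    have hsa : Real.sin a = Real.sqrt (1 - ⟪x, y⟫ ^ 2) := Real.sin_arccos _
    have hsb : Real.sin b = Real.sqrt (1 - ⟪y, z⟫ ^ 2) := Real.sin_arccos _
    set x' := x - ⟪x, y⟫ • y with hx'
    set z' := z - ⟪z, y⟫ • y with hz'
    have hyy : ⟪y, y⟫ = 1 := by rw [real_inner_self_eq_norm_sq, hy]; norm_num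
    have hxx : ⟪x, x⟫ = 1 := by rw [real_inner_self_eq_norm_sq, hx]; norm_num
    have hzz : ⟪z, z⟫ = 1 := by rw [real_inner_self_eq_norm_sq, hz]; norm_num
    have hx'n : ‖x'‖ = Real.sin a := by
      rw [hsa]
      have h2 : ‖x'‖ ^ 2 = 1 - ⟪x, y⟫ ^ 2 := by
        rw [← real_inner_self_eq_norm_sq, hx', real_inner_sub_sub_self,
          real_inner_smul_right, real_inner_smul_left, real_inner_smul_right, hxx, hyy]
        ring
      rw [← h2, Real.sqrt_sq (norm_nonneg _)]
    have hz'n : ‖z'‖ = Real.sin b := by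
      rw [hsb]
      have h2 : ‖z'‖ ^ 2 = 1 - ⟪y, z⟫ ^ 2 := by
        rw [← real_inner_self_eq_norm_sq, hz', real_inner_sub_sub_self,
          real_inner_smul_right, real_inner_smul_left, real_inner_smul_right, hzz, hyy,
          real_inner_comm z y]
        ring
      rw [← h2, Real.sqrt_sq (norm_nonneg _)]
    have hdecomp : ⟪x', z'⟫ = ⟪x, z⟫ - ⟪x, y⟫ * ⟪y, z⟫ := by
      simp only [hx', hz', inner_sub_left, inner_sub_right, real_inner_smul_left,
        real_inner_smul_right, hyy, real_inner_comm z y]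
      ring
    have hCS : -(‖x'‖ * ‖z'‖) ≤ ⟪x', z'⟫ :=
      (abs_le.mp (abs_real_inner_le_norm x' z')).1
    have key : Real.cos (a + b) ≤ ⟪x, z⟫ := by
      rw [Real.cos_add, hca, hcb, ← hx'n, ← hz'n]
      have := hCS
      rw [hdecomp] at this
      linarith
    have h1 : Real.arccos ⟪x, z⟫ ≤ Real.arccos (Real.cos (a + b)) := by
      rw [Real.arccos_eq_pi_div_two_sub_arcsin, Real.arccos_eq_pi_div_two_sub_arcsin]
      have := Real.monotone_arcsin key
      linarith
    rw [Real.arccos_cos (add_nonneg (Real.arccos_nonneg _) (Real.arccos_nonneg _)) hab] at h1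
    exact h1
  · exact le_trans (Real.arccos_le_pi _) (le_of_not_ge hab)

/-- The equator is nonempty. -/
lemma equator_nonempty (e : EuclideanSpace ℝ (Fin 3)) (he : ‖e‖ = 1) :
    (equator e).Nonempty := by
  have he0 : e ≠ 0 := by intro h; rw [h, norm_zero] at he; norm_num at he
  have hdim : Module.finrank ℝ (ℝ ∙ e) + Module.finrank ℝ (ℝ ∙ e)ᗮ
      = Module.finrank ℝ (EuclideanSpace ℝ (Fin 3)) :=
    Submodule.finrank_add_finrank_orthogonal _
  rw [finrank_span_singleton he0, finrank_euclideanSpace_fin] at hdim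
  have hpos : 0 < Module.finrank ℝ (ℝ ∙ e)ᗮ := by omega
  have : Nontrivial ((ℝ ∙ e)ᗮ : Submodule ℝ (EuclideanSpace ℝ (Fin 3))) :=
    Module.nontrivial_of_finrank_pos hpos
  obtain ⟨v, hv⟩ := exists_ne (0 : (ℝ ∙ e)ᗮ)
  have hv0 : (v : EuclideanSpace ℝ (Fin 3)) ≠ 0 := by
    simpa [Submodule.coe_eq_zero] using hv
  have horth : ⟪e, (v : EuclideanSpace ℝ (Fin 3))⟫ = 0 :=
    v.2 e (Submodule.mem_span_singleton_self e)
  refine ⟨‖(v : EuclideanSpace ℝ (Fin 3))‖⁻¹ • (v : EuclideanSpace ℝ (Fin 3)), ?_, ?_⟩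
  · exact norm_smul_inv_norm hv0
  · rw [real_inner_smul_left, real_inner_comm, horth, mul_zero]

/-- The equator is compact. -/
lemma equator_isCompact (e : EuclideanSpace ℝ (Fin 3)) : IsCompact (equator e) := by
  have hclosed : IsClosed (equator e) := by
    have : equator e = (fun x : EuclideanSpace ℝ (Fin 3) => ‖x‖) ⁻¹' {1} ∩
        (fun x : EuclideanSpace ℝ (Fin 3) => (⟪x, e⟫ : ℝ)) ⁻¹' {0} := by
      ext x; simp [equator]
    rw [this]
    exact (isClosed_singleton.preimage continuous_norm).inter
      (isClosed_singleton.preimage (continuous_id.inner continuous_const))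
  refine (isCompact_closedBall (0 : EuclideanSpace ℝ (Fin 3)) 1).of_isClosed_subset hclosed ?_
  intro x hx
  rw [Metric.mem_closedBall, dist_zero_right, hx.1]

/-- If `(x₀, θ₀)` lies in the invisible domain (i.e.
`θ₀ < f y + d(x₀,y)` for all `y ∈ ∂D`), then the spherical projection of its past
`{x : f₋(x) < θ₀ - d(x,x₀)}` stays at distance `≥ ε` from the equator, i.e. is
contained in a compact subset of the open hemisphere. -/
theorem past_of_point_in_compact_of_open_hemisphere
    (e : EuclideanSpace ℝ (Fin 3)) (he : ‖e‖ = 1)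
    (f : EuclideanSpace ℝ (Fin 3) → ℝ)
    (hLip : ∀ x ∈ equator e, ∀ y ∈ equator e, |f x - f y| ≤ Real.arccos ⟪x, y⟫)
    (x₀ : EuclideanSpace ℝ (Fin 3)) (hx₀ : x₀ ∈ openHemi e) (θ₀ : ℝ)
    (hθ₀ : ∀ y ∈ equator e, θ₀ < f y + Real.arccos ⟪x₀, y⟫) :
    ∃ ε > 0, ∀ x ∈ closedHemi e,
      lowerEnv (equator e) f x < θ₀ - Real.arccos ⟪x, x₀⟫ → ε ≤ ⟪x, e⟫ := by
  obtain ⟨z₀, hz₀⟩ := equator_nonempty e he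
  -- continuity of f on the equator
  have hfcont : ContinuousOn f (equator e) := by
    intro y hy
    have harc : Filter.Tendsto (fun w : EuclideanSpace ℝ (Fin 3) => Real.arccos ⟪w, y⟫)
        (nhdsWithin y (equator e)) (nhds 0) := by
      have hc : Continuous (fun w : EuclideanSpace ℝ (Fin 3) => Real.arccos ⟪w, y⟫) :=
        Real.continuous_arccos.comp (continuous_id.inner continuous_const)
      have := (hc.tendsto y).mono_left (nhdsWithin_le_nhds (s := equator e))
      have hyy : ⟪y, y⟫ = (1 : ℝ) := by rw [real_inner_self_eq_norm_sq, hy.1]; norm_num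
      simpa [hyy, hy.1, Real.arccos_one] using this
    have : Filter.Tendsto (fun w => dist (f w) (f y)) (nhdsWithin y (equator e)) (nhds 0) := by
      refine squeeze_zero' (Filter.Eventually.of_forall fun _ => dist_nonneg) ?_ harc
      filter_upwards [self_mem_nhdsWithin] with w hw
      rw [Real.dist_eq]
      exact hLip w hw y hy
    exact tendsto_iff_dist_tendsto_zero.2 this
  -- minimum of f y + d(x₀, y) over the equator
  have hgcont : ContinuousOn (fun y => f y + Real.arccos ⟪x₀, y⟫) (equator e) :=
    hfcont.add ((Real.continuous_arccos.comp (continuous_const.inner continuous_id)).continuousOn)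
  obtain ⟨y₀, hy₀K, hy₀min⟩ := (equator_isCompact e).exists_isMinOn ⟨z₀, hz₀⟩ hgcont
  set δ : ℝ := f y₀ + Real.arccos ⟪x₀, y₀⟫ - θ₀ with hδ
  have hδpos : 0 < δ := by have := hθ₀ y₀ hy₀K; simp only [hδ]; linarith
  set m : ℝ := min (δ / 2) 1 with hm
  have hmpos : 0 < m := lt_min (by linarith) one_pos
  have hm1 : m ≤ 1 := min_le_right _ _
  have hmhalf : (1 : ℝ) ≤ π / 2 := by have := Real.pi_gt_three; linarith
  refine ⟨Real.sin m, Real.sin_pos_of_pos_of_lt_pi hmpos (by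
    have := Real.pi_gt_three; linarith), ?_⟩
  intro x hx hpast
  obtain ⟨hx1, hx2⟩ := hx
  set t : ℝ := ⟪x, e⟫ with ht
  have ht1 : t ≤ 1 := by
    have := abs_real_inner_le_norm x e
    rw [hx1, he, one_mul] at this
    exact (abs_le.mp this).2
  by_cases hcase : 1 ≤ t
  · exact le_trans (Real.sin_le_one m) hcase
  push_neg at hcase
  -- the nearest equator point to x
  set w : EuclideanSpace ℝ (Fin 3) := x - t • e with hw
  have hxx : ⟪x, x⟫ = (1 : ℝ) := by rw [real_inner_self_eq_norm_sq, hx1]; norm_num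
  have hee : ⟪e, e⟫ = (1 : ℝ) := by rw [real_inner_self_eq_norm_sq, he]; norm_num
  have hw2 : ‖w‖ ^ 2 = 1 - t ^ 2 := by
    rw [← real_inner_self_eq_norm_sq, hw, real_inner_sub_sub_self, real_inner_smul_right,
      real_inner_smul_left, real_inner_smul_right, hxx, hee, ← ht]
    ring
  have htsq : 0 < 1 - t ^ 2 := by nlinarith
  have hw0 : w ≠ 0 := by
    intro h
    rw [h, norm_zero] at hw2
    nlinarith
  have hwn : ‖w‖ = Real.sqrt (1 - t ^ 2) := by
    rw [← hw2, Real.sqrt_sq (norm_nonneg _)]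
  set z : EuclideanSpace ℝ (Fin 3) := ‖w‖⁻¹ • w with hz
  have hzK : z ∈ equator e := by
    constructor
    · exact norm_smul_inv_norm hw0
    · rw [hz, real_inner_smul_left, hw, inner_sub_left, real_inner_smul_left, hee, ← ht]
      ring
  have hxz : ⟪x, z⟫ = Real.sqrt (1 - t ^ 2) := by
    rw [hz, real_inner_smul_right, hw, inner_sub_right, real_inner_smul_right, hxx, ← ht, hwn,
      inv_mul_eq_div]
    rw [show (1 : ℝ) - t * t = 1 - t ^ 2 from by ring, Real.div_sqrt]
  have harcsin : Real.arccos ⟪x, z⟫ = Real.arcsin t := by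
    rw [hxz, ← Real.cos_arcsin,
      Real.arccos_cos (Real.arcsin_nonneg.2 hx2)
        (le_trans (Real.arcsin_le_pi_div_two t) (by have := Real.pi_pos; linarith))]
  -- the three estimates
  have hbdd : BddAbove ((fun z => f z - Real.arccos ⟪x, z⟫) '' equator e) := by
    refine ⟨f z₀ + π, ?_⟩
    rintro - ⟨u, hu, rfl⟩
    have h1 := (abs_le.mp (hLip u hu z₀ hz₀)).2
    have h2 := Real.arccos_le_pi (⟪u, z₀⟫ : ℝ)
    have h3 := Real.arccos_nonneg (⟪x, u⟫ : ℝ)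
    simp only
    linarith
  have hsup : f z - Real.arccos ⟪x, z⟫ ≤ lowerEnv (equator e) f x :=
    le_csSup hbdd (Set.mem_image_of_mem _ hzK)
  have hmin : θ₀ + δ ≤ f z + Real.arccos ⟪x₀, z⟫ := by
    have h := isMinOn_iff.mp hy₀min z hzK
    simp only [hδ]
    linarith
  have htri : Real.arccos ⟪x₀, z⟫ ≤ Real.arccos ⟪x₀, x⟫ + Real.arccos ⟪x, z⟫ :=
    arccos_inner_triangle x₀ x z hx₀.1 hx1 hzK.1
  have hc2 : Real.arccos ⟪x₀, x⟫ = Real.arccos ⟪x, x₀⟫ := by rw [real_inner_comm]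
  have hkey : δ / 2 < Real.arccos ⟪x, z⟫ := by linarith
  rw [harcsin] at hkey
  have hmlt : m < Real.arcsin t := lt_of_le_of_lt (min_le_left _ _) hkey
  have hsin : Real.sin m < Real.sin (Real.arcsin t) := by
    apply Real.strictMonoOn_sin ⟨by linarith [Real.pi_pos], by linarith⟩
      ⟨Real.neg_pi_div_two_le_arcsin t, Real.arcsin_le_pi_div_two t⟩ hmlt
  rw [Real.sin_arcsin (by linarith) ht1] at hsin
  exact hsin.le
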